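/- arXiv:1207.0116 — 2 statements merged into one kernel-verified Lean document; each statement's English description precedes it below -/
import Mathlib

section
/- Let d ≥ 3 and κ ≥ 1 be coprime integers, and let e = d if 4 divides d, e = 2d if d is odd, and e = d/2 if d ≡ 2 (mod 4). Then π_{κ/d}((−q)^e + q) − π_{κ/d}(q + 1) = 2κe/d − 2⌊2κ/d⌋ + 2⌊κ/d⌋, and this quantity is positive. (For d = 2 and κ odd, the quantity 2κe/d − 2⌊2κ/d⌋ + 2⌊κ/d⌋ equals −1.) -/
open Polynomial

/-- `argCount t f` is the cardinality of the multiset `Arg_t(f)` of real numbers `λ` with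
`0 < λ ≤ 2πt` such that `e^{iλ}` is a (complex) root of the real polynomial `f`, each such `λ`
counted with the multiplicity of `e^{iλ}` as a root of `f`. -/
noncomputable def argCount (t : ℝ) (f : Polynomial ℝ) : ℕ :=
  ((f.map (algebraMap ℝ ℂ)).roots.map fun ξ =>
    Nat.card {l : ℝ // 0 < l ∧ l ≤ 2 * Real.pi * t ∧ Complex.exp ((l : ℂ) * Complex.I) = ξ}).sum

/-- `piFn κ d f` is the rational number
`π_{κ/d}(f) = (a(f) + A(f))·(κ/d) + |Arg_{κ/d}(f)| + (1/2)·(multiplicity of 1 as a root of f)`,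
where `a(f)` is the multiplicity of `0` as a root of `f` and `A(f)` is the degree of `f`. -/
noncomputable def piFn (κ d : ℕ) (f : Polynomial ℝ) : ℚ :=
  ((rootMultiplicity 0 f : ℚ) + (f.natDegree : ℚ)) * (κ : ℚ) / (d : ℚ)
    + (argCount ((κ : ℝ) / (d : ℝ)) f : ℚ) + (rootMultiplicity 1 f : ℚ) / 2

section Helpers

lemma natCard_int_Ioc (a b : ℤ) : Nat.card {j : ℤ // a < j ∧ j ≤ b} = (b - a).toNat := by
  have e : {j : ℤ // a < j ∧ j ≤ b} ≃ {j : ℤ // j ∈ Finset.Ioc a b} :=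
    Equiv.subtypeEquivRight (by simp)
  rw [Nat.card_congr e, Nat.card_eq_finsetCard, Int.card_Ioc]

lemma exp_eq_exp_real_iff (l θ : ℝ) :
    Complex.exp ((l : ℂ) * Complex.I) = Complex.exp ((θ : ℂ) * Complex.I)
      ↔ ∃ j : ℤ, l = θ + 2 * Real.pi * j := by
  rw [Complex.exp_eq_exp_iff_exists_int]
  constructor
  · rintro ⟨n, hn⟩
    refine ⟨n, ?_⟩
    have h2 : ((l - (θ + 2 * Real.pi * n) : ℝ) : ℂ) * Complex.I = 0 := by
      push_cast; linear_combination hn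
    have h3 := (mul_eq_zero.mp h2).resolve_right Complex.I_ne_zero
    have h4 : (l - (θ + 2 * Real.pi * n) : ℝ) = 0 := by exact_mod_cast h3
    linarith
  · rintro ⟨j, rfl⟩
    exact ⟨j, by push_cast; ring⟩

noncomputable def countExpEquiv (θ M : ℝ) :
    {l : ℝ // 0 < l ∧ l ≤ M ∧ Complex.exp ((l : ℂ) * Complex.I) = Complex.exp ((θ : ℂ) * Complex.I)}
      ≃ {j : ℤ // ⌊(-θ) / (2 * Real.pi)⌋ < j ∧ j ≤ ⌊(M - θ) / (2 * Real.pi)⌋} := by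
  have pi2 : (0:ℝ) < 2 * Real.pi := by positivity
  refine (Equiv.subtypeEquivRight (fun l => by rw [exp_eq_exp_real_iff])).trans ?_
  refine ((Equiv.ofBijective
      (fun (j : {j : ℤ // 0 < θ + 2 * Real.pi * j ∧ θ + 2 * Real.pi * j ≤ M}) =>
        (⟨θ + 2 * Real.pi * (j : ℤ), j.2.1, j.2.2, ⟨j, rfl⟩⟩ :
          {l : ℝ // 0 < l ∧ l ≤ M ∧ ∃ k : ℤ, l = θ + 2 * Real.pi * k})) ?_).symm.trans
    (Equiv.subtypeEquivRight (fun j => ?_)))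
  · constructor
    · rintro ⟨j, hj⟩ ⟨j', hj'⟩ h
      simp only [Subtype.mk.injEq] at h
      have h5 : (j : ℝ) = j' :=
        mul_left_cancel₀ (ne_of_gt pi2) (by linarith)
      exact Subtype.ext (by exact_mod_cast h5)
    · rintro ⟨l, h1, h2, j, rfl⟩
      exact ⟨⟨j, by simpa using h1, by simpa using h2⟩, rfl⟩
  · rw [Int.floor_lt, Int.le_floor, div_lt_iff₀ pi2, le_div_iff₀ pi2]
    constructor
    · rintro ⟨h1, h2⟩; exact ⟨by linarith, by linarith⟩
    · rintro ⟨h1, h2⟩; exact ⟨by linarith, by linarith⟩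

lemma count_exp_set (θ M : ℝ) :
    Nat.card {l : ℝ // 0 < l ∧ l ≤ M ∧ Complex.exp ((l : ℂ) * Complex.I) = Complex.exp ((θ : ℂ) * Complex.I)}
      = (⌊(M - θ) / (2 * Real.pi)⌋ - ⌊(-θ) / (2 * Real.pi)⌋).toNat := by
  rw [Nat.card_congr (countExpEquiv θ M), natCard_int_Ioc]

lemma count_exp_finite (θ M : ℝ) :
    Finite {l : ℝ // 0 < l ∧ l ≤ M ∧ Complex.exp ((l : ℂ) * Complex.I) = Complex.exp ((θ : ℂ) * Complex.I)} := by
  have e2 : {j : ℤ // ⌊(-θ) / (2 * Real.pi)⌋ < j ∧ j ≤ ⌊(M - θ) / (2 * Real.pi)⌋}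
      ≃ {j : ℤ // j ∈ Finset.Ioc ⌊(-θ) / (2 * Real.pi)⌋ ⌊(M - θ) / (2 * Real.pi)⌋} :=
    Equiv.subtypeEquivRight (by simp)
  exact Finite.of_equiv _ ((countExpEquiv θ M).trans e2).symm

lemma natCard_sigma {n : ℕ} (β : Fin n → Type*) [h : ∀ k, Finite (β k)] :
    Nat.card ((k : Fin n) × β k) = ∑ k : Fin n, Nat.card (β k) := by
  letI : ∀ k, Fintype (β k) := fun k => Fintype.ofFinite _
  simp [Nat.card_eq_fintype_card]

end Helpers

open Complex in
/-- Main counting lemma: the sum over the `n`-th roots of `exp(θc i)`. -/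
lemma sum_count_nthRoots (n : ℕ) (hn : 0 < n) (θc M : ℝ) :
    ((Polynomial.nthRoots n (Complex.exp ((θc : ℂ) * Complex.I))).map fun ξ =>
        Nat.card {l : ℝ // 0 < l ∧ l ≤ M ∧ Complex.exp ((l : ℂ) * Complex.I) = ξ}).sum
      = (⌊(n * M - θc) / (2 * Real.pi)⌋ - ⌊(-θc) / (2 * Real.pi)⌋).toNat := by
  classical
  have hne : (n : ℂ) ≠ 0 := Nat.cast_ne_zero.mpr hn.ne'
  -- explicit enumeration of the roots
  have hζ := Complex.isPrimitiveRoot_exp n hn.ne'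
  have hα : (Complex.exp (((θc / n : ℝ) : ℂ) * Complex.I)) ^ n = Complex.exp ((θc : ℂ) * Complex.I) := by
    rw [← Complex.exp_nat_mul]
    congr 1
    have : (n : ℂ) ≠ 0 := hne
    push_cast
    field_simp
  have hroots := hζ.nthRoots_eq hα
  -- each enumerated root is exp(θ_k i) with θ_k = (θc + 2π k)/n
  set θ : ℕ → ℝ := fun k => (θc + 2 * Real.pi * k) / n with hθ
  have hform : ∀ k : ℕ, Complex.exp (2 * Real.pi * Complex.I / n) ^ k
      * Complex.exp (((θc / n : ℝ) : ℂ) * Complex.I) = Complex.exp ((θ k : ℂ) * Complex.I) := by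
    intro k
    rw [← Complex.exp_nat_mul, ← Complex.exp_add]
    congr 1
    simp only [hθ]
    push_cast
    field_simp
    ring
  rw [hroots]
  have : (Multiset.map (fun x => Complex.exp (2 * Real.pi * Complex.I / ↑n) ^ x
      * Complex.exp (((θc / n : ℝ) : ℂ) * Complex.I)) (Multiset.range n)) =
      (Multiset.range n).map (fun k => Complex.exp ((θ k : ℂ) * Complex.I)) :=
    Multiset.map_congr rfl (fun k _ => hform k)
  rw [this, Multiset.map_map]
  simp only [Function.comp]
  -- now sum over range n
  have hsum : ((Multiset.range n).map fun k =>
      Nat.card {l : ℝ // 0 < l ∧ l ≤ M ∧ Complex.exp ((l : ℂ) * Complex.I) = Complex.exp ((θ k : ℂ) * Complex.I)}).sum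
      = ∑ k : Fin n, Nat.card {l : ℝ // 0 < l ∧ l ≤ M ∧ Complex.exp ((l : ℂ) * Complex.I) = Complex.exp ((θ (k : ℕ) : ℂ) * Complex.I)} := by
    rw [← Finset.sum_range fun k => Nat.card {l : ℝ // 0 < l ∧ l ≤ M ∧ Complex.exp ((l : ℂ) * Complex.I) = Complex.exp ((θ k : ℂ) * Complex.I)}]
    rfl
  rw [hsum]
  -- now identify the sum with a single count via a sigma-type bijection
  haveI : ∀ k : Fin n, Finite {l : ℝ // 0 < l ∧ l ≤ M ∧ Complex.exp ((l : ℂ) * Complex.I) = Complex.exp ((θ (k : ℕ) : ℂ) * Complex.I)} :=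
    fun k => count_exp_finite _ _
  rw [← natCard_sigma (fun k : Fin n => {l : ℝ // 0 < l ∧ l ≤ M ∧ Complex.exp ((l : ℂ) * Complex.I) = Complex.exp ((θ (k : ℕ) : ℂ) * Complex.I)})]
  have hnR : (0:ℝ) < n := Nat.cast_pos.mpr hn
  have key : ((k : Fin n) × {l : ℝ // 0 < l ∧ l ≤ M ∧ Complex.exp ((l : ℂ) * Complex.I) = Complex.exp ((θ (k : ℕ) : ℂ) * Complex.I)})
      ≃ {u : ℝ // 0 < u ∧ u ≤ n * M ∧ Complex.exp ((u : ℂ) * Complex.I) = Complex.exp ((θc : ℂ) * Complex.I)} := by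
    refine Equiv.ofBijective (fun p => ⟨n * p.2.1, ?_, ?_, ?_⟩) ⟨?_, ?_⟩
    · exact mul_pos hnR p.2.2.1
    · exact mul_le_mul_of_nonneg_left p.2.2.2.1 hnR.le
    · -- exp(n l i) = exp(θc i)
      obtain ⟨k, l, h1, h2, h3⟩ := p
      have e1 : ((n * l : ℝ) : ℂ) * Complex.I = (n : ℕ) * ((l : ℂ) * Complex.I) := by push_cast; ring
      rw [e1, Complex.exp_nat_mul, h3, ← Complex.exp_nat_mul]
      have e2 : ((n : ℕ) : ℂ) * ((θ (k : ℕ) : ℂ) * Complex.I) = ((n * θ (k : ℕ) : ℝ) : ℂ) * Complex.I := by push_cast; ring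
      rw [e2, exp_eq_exp_real_iff]
      refine ⟨(k : ℕ), ?_⟩
      simp only [hθ]
      field_simp
      norm_cast
    · -- injective
      rintro ⟨k, l, h1, h2, h3⟩ ⟨k', l', h1', h2', h3'⟩ hF
      simp only [Subtype.mk.injEq] at hF
      have hl : l = l' := mul_left_cancel₀ hnR.ne' hF
      subst hl
      have hkk : Complex.exp ((θ (k : ℕ) : ℂ) * Complex.I) = Complex.exp ((θ (k' : ℕ) : ℂ) * Complex.I) := by
        rw [← h3, ← h3']
      rw [exp_eq_exp_real_iff] at hkk
      obtain ⟨m, hm⟩ := hkk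
      have : (k : ℝ) = (k' : ℝ) + m * n := by
        rw [hθ] at hm
        simp only at hm
        field_simp at hm
        have hpi := Real.pi_ne_zero
        nlinarith [Real.pi_pos]
      have hint : (k : ℤ) = (k' : ℤ) + m * n := by exact_mod_cast this
      have hk1 : (k : ℤ) < n := by exact_mod_cast k.2
      have hk2 : (k' : ℤ) < n := by exact_mod_cast k'.2
      have hk0 : (0:ℤ) ≤ (k : ℤ) := Int.ofNat_nonneg _
      have hk0' : (0:ℤ) ≤ (k' : ℤ) := Int.ofNat_nonneg _
      have hm0 : m = 0 := by
        rcases lt_trichotomy m 0 with h | h | h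
        · exfalso
          have h1 : m * (n:ℤ) ≤ -1 * n := mul_le_mul_of_nonneg_right (by omega) (by omega)
          omega
        · exact h
        · exfalso
          have h1 : 1 * (n:ℤ) ≤ m * n := mul_le_mul_of_nonneg_right (by omega) (by omega)
          omega
      have : k = k' := by
        apply Fin.ext
        have h9 : (k : ℤ) = (k' : ℤ) := by rw [hint, hm0]; ring
        exact_mod_cast h9
      subst this
      rfl
    · -- surjective
      rintro ⟨u, hu1, hu2, hu3⟩
      rw [exp_eq_exp_real_iff] at hu3
      obtain ⟨m, hm⟩ := hu3
      have hnZ : (0:ℤ) < (n:ℤ) := by exact_mod_cast hn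
      set k0 : ℤ := m % (n : ℤ) with hk0def
      have hk00 : 0 ≤ k0 := Int.emod_nonneg m hnZ.ne'
      have hk0n : k0 < n := Int.emod_lt_of_pos m hnZ
      set j : ℤ := m / (n : ℤ) with hjdef
      have hdm : (n:ℤ) * j + k0 = m := Int.mul_ediv_add_emod m n
      have hkn : k0.toNat < n := by omega
      refine ⟨⟨⟨k0.toNat, hkn⟩, ⟨u / n, by positivity, ?_, ?_⟩⟩, ?_⟩
      · rw [div_le_iff₀ hnR]; linarith [hu2]
      · rw [exp_eq_exp_real_iff]
        refine ⟨j, ?_⟩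
        have hc : ((k0.toNat : ℕ) : ℝ) = (k0 : ℝ) := by exact_mod_cast Int.toNat_of_nonneg hk00
        have hmR : (m : ℝ) = n * j + k0 := by exact_mod_cast hdm.symm
        simp only [hθ, hc]
        rw [div_eq_iff hnR.ne'] at *
        rw [hm]
        field_simp
        linear_combination (2 * Real.pi) * hmR
      · simp only [Subtype.mk.injEq]
        field_simp
  rw [Nat.card_congr key, count_exp_set]

section ArgCounts
open Complex

lemma floor_half_shift (κ d : ℕ) (hd : 1 ≤ d) :
    (2 * Real.pi * ((κ:ℝ)/(d:ℝ)) - Real.pi) / (2 * Real.pi) = (((κ:ℚ)/(d:ℚ) - 1/2 : ℚ) : ℝ) := by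
  have hpi := Real.pi_ne_zero
  have hdR : ((d:ℝ)) ≠ 0 := by positivity
  push_cast
  field_simp

lemma floor_neg_pi : ⌊(-Real.pi) / (2 * Real.pi)⌋ = -1 := by
  have hpi := Real.pi_ne_zero
  have : (-Real.pi) / (2 * Real.pi) = -(1/2 : ℝ) := by field_simp
  rw [this]
  norm_num [Int.floor_eq_iff, show ((-1:ℤ):ℝ) = -1 by norm_num]

lemma argCount_g (κ d : ℕ) (hκ : 1 ≤ κ) (hd : 1 ≤ d) :
    (argCount ((κ:ℝ)/(d:ℝ)) (X + 1) : ℤ) = ⌊((κ:ℚ)/(d:ℚ) - 1/2 : ℚ)⌋ + 1 := by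
  have hmap : ((X + 1 : ℝ[X]).map (algebraMap ℝ ℂ)) = X - C (-1) := by
    rw [Polynomial.map_add, Polynomial.map_one, map_X, map_neg, C_1]
    ring
  rw [argCount, hmap, roots_X_sub_C]
  rw [show ((-1 : ℂ)) = Complex.exp ((Real.pi : ℂ) * Complex.I) from Complex.exp_pi_mul_I.symm]
  rw [Multiset.map_singleton, Multiset.sum_singleton, count_exp_set, floor_half_shift κ d hd,
    Rat.floor_cast, floor_neg_pi]
  have hge : (-1 : ℤ) ≤ ⌊((κ:ℚ)/(d:ℚ) - 1/2 : ℚ)⌋ := by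
    rw [Int.le_floor]
    have : (0:ℚ) ≤ (κ:ℚ)/(d:ℚ) := by positivity
    push_cast
    linarith
  omega

lemma card_exp_zero (M : ℝ) :
    Nat.card {l : ℝ // 0 < l ∧ l ≤ M ∧ Complex.exp ((l : ℂ) * Complex.I) = 0} = 0 := by
  have : IsEmpty {l : ℝ // 0 < l ∧ l ≤ M ∧ Complex.exp ((l : ℂ) * Complex.I) = 0} :=
    ⟨fun x => Complex.exp_ne_zero _ x.2.2.2⟩
  exact Nat.card_of_isEmpty

-- f = (-X)^e + X, e even ≥ 2 :  roots over ℂ are 0 and the (e-1)-th roots of -1.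
lemma argCount_even (e κ d : ℕ) (he : Even e) (he2 : 2 ≤ e) (hκ : 1 ≤ κ) (hd : 1 ≤ d) :
    (argCount ((κ:ℝ)/(d:ℝ)) ((-X)^e + X) : ℤ)
      = ⌊(((e:ℚ) - 1) * (κ:ℚ)/(d:ℚ) - 1/2 : ℚ)⌋ + 1 := by
  obtain ⟨n, hn⟩ : ∃ n, e = n + 1 := ⟨e - 1, by omega⟩
  have hn1 : 1 ≤ n := by omega
  have hfact : ((-X)^e + X : ℝ[X]) = X * (X^n + 1) := by
    rw [he.neg_pow, hn]
    ring
  have hmap : (((-X)^e + X : ℝ[X]).map (algebraMap ℝ ℂ)) = X * (X^n + 1) := by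
    rw [hfact, Polynomial.map_mul, Polynomial.map_add, Polynomial.map_pow, map_X,
      Polynomial.map_one]
  have hmonic : (X^n + 1 : ℂ[X]).Monic := by
    have := monic_X_pow_add_C (1 : ℂ) (n := n) (by omega)
    rwa [C_1] at this
  have hne : (X * (X^n + 1) : ℂ[X]) ≠ 0 := mul_ne_zero X_ne_zero hmonic.ne_zero
  have hroots : (X * (X^n + 1) : ℂ[X]).roots = 0 ::ₘ nthRoots n (-1) := by
    rw [roots_mul hne, roots_X]
    have : (X^n + 1 : ℂ[X]) = X^n - C (-1) := by rw [map_neg, C_1]; ring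
    rw [this]
    rfl
  rw [argCount, hmap, hroots, Multiset.map_cons, Multiset.sum_cons, card_exp_zero,
    show ((-1 : ℂ)) = Complex.exp ((Real.pi : ℂ) * Complex.I) from Complex.exp_pi_mul_I.symm,
    sum_count_nthRoots n (by omega), floor_neg_pi]
  have harg : ((n:ℝ) * (2 * Real.pi * ((κ:ℝ)/(d:ℝ))) - Real.pi) / (2 * Real.pi)
      = ((((e:ℚ) - 1) * (κ:ℚ)/(d:ℚ) - 1/2 : ℚ) : ℝ) := by
    have hpi := Real.pi_ne_zero
    have hdR : ((d:ℝ)) ≠ 0 := by positivity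
    have hecast : ((e:ℚ):ℝ) = (n:ℝ) + 1 := by rw [hn]; push_cast; ring
    push_cast
    rw [hn]
    push_cast
    field_simp
    ring
  rw [harg, Rat.floor_cast]
  have hge : (-1 : ℤ) ≤ ⌊(((e:ℚ) - 1) * (κ:ℚ)/(d:ℚ) - 1/2 : ℚ)⌋ := by
    rw [Int.le_floor]
    have h1 : (0:ℚ) ≤ ((e:ℚ) - 1) * (κ:ℚ)/(d:ℚ) := by
      apply div_nonneg _ (by positivity)
      have h2 : (1:ℚ) ≤ (e:ℚ) := by exact_mod_cast (by omega : 1 ≤ e)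
      have h3 : (0:ℚ) ≤ (κ:ℚ) := by positivity
      nlinarith
    push_cast
    linarith
  simp only [zero_add]
  omega

lemma argCount_odd (e κ d : ℕ) (ho : Odd e) (he2 : 2 ≤ e) (hκ : 1 ≤ κ) (hd : 1 ≤ d) :
    (argCount ((κ:ℝ)/(d:ℝ)) ((-X)^e + X) : ℤ)
      = ⌊(((e:ℚ) - 1) * (κ:ℚ)/(d:ℚ) : ℚ)⌋ := by
  obtain ⟨n, hn⟩ : ∃ n, e = n + 1 := ⟨e - 1, by omega⟩
  have hn1 : 1 ≤ n := by omega
  have hfact : ((-X)^e + X : ℝ[X]) = C (-1) * (X * (X^n - 1)) := by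
    rw [ho.neg_pow, hn, map_neg, C_1]
    ring
  have hmap : (((-X)^e + X : ℝ[X]).map (algebraMap ℝ ℂ)) = C (-1) * (X * (X^n - 1)) := by
    rw [hfact, Polynomial.map_mul, Polynomial.map_mul, Polynomial.map_sub, Polynomial.map_pow,
      map_X, Polynomial.map_one, map_C]
    norm_num
  have hmonic : (X^n - 1 : ℂ[X]).Monic := by
    have := monic_X_pow_sub_C (1 : ℂ) (n := n) (by omega)
    rwa [C_1] at this
  have hne : (X * (X^n - 1) : ℂ[X]) ≠ 0 := mul_ne_zero X_ne_zero hmonic.ne_zero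
  have hroots : (C (-1) * (X * (X^n - 1)) : ℂ[X]).roots = 0 ::ₘ nthRoots n 1 := by
    rw [roots_C_mul _ (by norm_num : (-1:ℂ) ≠ 0), roots_mul hne, roots_X]
    have : (X^n - 1 : ℂ[X]) = X^n - C 1 := by rw [C_1]
    rw [this]
    rfl
  rw [argCount, hmap, hroots, Multiset.map_cons, Multiset.sum_cons, card_exp_zero,
    show ((1 : ℂ)) = Complex.exp (((0:ℝ) : ℂ) * Complex.I) by
      rw [Complex.ofReal_zero, zero_mul, Complex.exp_zero],
    sum_count_nthRoots n (by omega)]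
  have h0 : ⌊(-(0:ℝ)) / (2 * Real.pi)⌋ = 0 := by norm_num
  have harg : ((n:ℝ) * (2 * Real.pi * ((κ:ℝ)/(d:ℝ))) - 0) / (2 * Real.pi)
      = ((((e:ℚ) - 1) * (κ:ℚ)/(d:ℚ) : ℚ) : ℝ) := by
    have hpi := Real.pi_ne_zero
    have hdR : ((d:ℝ)) ≠ 0 := by positivity
    push_cast
    rw [hn]
    push_cast
    field_simp
    ring
  rw [h0, harg, Rat.floor_cast]
  have hge : (0 : ℤ) ≤ ⌊(((e:ℚ) - 1) * (κ:ℚ)/(d:ℚ) : ℚ)⌋ := by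
    rw [Int.le_floor]
    have h1 : (0:ℚ) ≤ ((e:ℚ) - 1) * (κ:ℚ)/(d:ℚ) := by
      apply div_nonneg _ (by positivity)
      have h2 : (1:ℚ) ≤ (e:ℚ) := by exact_mod_cast (by omega : 1 ≤ e)
      have h3 : (0:ℚ) ≤ (κ:ℚ) := by positivity
      nlinarith
    push_cast
    linarith
  simp only [zero_add]
  omega

end ArgCounts

section PolyFacts

lemma gdeg : (X + 1 : ℝ[X]).natDegree = 1 := by
  rw [← C_1, natDegree_X_add_C]
lemma grm0 : rootMultiplicity (0:ℝ) (X + 1) = 0 :=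
  rootMultiplicity_eq_zero (by simp [IsRoot])
lemma grm1 : rootMultiplicity (1:ℝ) (X + 1) = 0 :=
  rootMultiplicity_eq_zero (by norm_num [IsRoot])

lemma monicR (n : ℕ) (hn : 1 ≤ n) : (X^n + 1 : ℝ[X]).Monic := by
  have := monic_X_pow_add_C (1 : ℝ) (n := n) (by omega)
  rwa [C_1] at this

lemma fne (n : ℕ) (hn : 1 ≤ n) : (X * (X^n + 1) : ℝ[X]) ≠ 0 :=
  mul_ne_zero X_ne_zero (monicR n hn).ne_zero

lemma deg_even (n : ℕ) (hn : 1 ≤ n) : (X * (X^n + 1) : ℝ[X]).natDegree = n + 1 := by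
  rw [natDegree_mul X_ne_zero (monicR n hn).ne_zero, natDegree_X]
  rw [← C_1, natDegree_X_pow_add_C]
  omega

lemma rm0_even (n : ℕ) (hn : 1 ≤ n) : rootMultiplicity (0:ℝ) (X * (X^n + 1)) = 1 := by
  rw [rootMultiplicity_mul (fne n hn)]
  have h1 : rootMultiplicity (0:ℝ) X = 1 := by
    have : (X : ℝ[X]) = X - C 0 := by simp
    rw [this, rootMultiplicity_X_sub_C_self]
  have h2 : rootMultiplicity (0:ℝ) (X^n + 1) = 0 := by
    apply rootMultiplicity_eq_zero
    simp [IsRoot, zero_pow (by omega : n ≠ 0)]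
  omega

lemma rm1_even (n : ℕ) : rootMultiplicity (1:ℝ) (X * (X^n + 1)) = 0 :=
  rootMultiplicity_eq_zero (by norm_num [IsRoot])

lemma monicR' (n : ℕ) (hn : 1 ≤ n) : (X^n - 1 : ℝ[X]).Monic := by
  have := monic_X_pow_sub_C (1 : ℝ) (n := n) (by omega)
  rwa [C_1] at this

lemma fne' (n : ℕ) (hn : 1 ≤ n) : (C (-1) * (X * (X^n - 1)) : ℝ[X]) ≠ 0 :=
  mul_ne_zero (by simp) (mul_ne_zero X_ne_zero (monicR' n hn).ne_zero)

lemma deg_odd (n : ℕ) (hn : 1 ≤ n) : (C (-1) * (X * (X^n - 1)) : ℝ[X]).natDegree = n + 1 := by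
  rw [natDegree_C_mul (by norm_num : (-1:ℝ) ≠ 0),
    natDegree_mul X_ne_zero (monicR' n hn).ne_zero, natDegree_X]
  rw [← C_1, natDegree_X_pow_sub_C]
  omega

lemma rm0_odd (n : ℕ) (hn : 1 ≤ n) : rootMultiplicity (0:ℝ) (C (-1) * (X * (X^n - 1))) = 1 := by
  rw [rootMultiplicity_mul (fne' n hn), rootMultiplicity_mul
    (mul_ne_zero X_ne_zero (monicR' n hn).ne_zero)]
  have h0 : rootMultiplicity (0:ℝ) (C (-1) : ℝ[X]) = 0 :=
    rootMultiplicity_eq_zero (by norm_num [IsRoot])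
  have h1 : rootMultiplicity (0:ℝ) X = 1 := by
    have : (X : ℝ[X]) = X - C 0 := by simp
    rw [this, rootMultiplicity_X_sub_C_self]
  have h2 : rootMultiplicity (0:ℝ) (X^n - 1) = 0 := by
    apply rootMultiplicity_eq_zero
    simp [IsRoot, zero_pow (by omega : n ≠ 0)]
  omega

lemma rm1_odd (n : ℕ) (hn : 1 ≤ n) :
    rootMultiplicity (1:ℝ) (C (-1) * (X * (X^n - 1))) = 1 := by
  rw [rootMultiplicity_mul (fne' n hn), rootMultiplicity_mul
    (mul_ne_zero X_ne_zero (monicR' n hn).ne_zero)]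
  have h0 : rootMultiplicity (1:ℝ) (C (-1) : ℝ[X]) = 0 :=
    rootMultiplicity_eq_zero (by norm_num [IsRoot])
  have h1 : rootMultiplicity (1:ℝ) X = 0 :=
    rootMultiplicity_eq_zero (by norm_num [IsRoot])
  have h2 : rootMultiplicity (1:ℝ) (X^n - 1) = 1 := by
    have hgeom : (X^n - 1 : ℝ[X]) = (X - C 1) * (∑ i ∈ Finset.range n, X^i) := by
      rw [C_1, mul_comm]
      exact (geom_sum_mul X n).symm
    have hne2 : ((X - C 1) * (∑ i ∈ Finset.range n, X^i) : ℝ[X]) ≠ 0 := by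
      rw [← hgeom]; exact (monicR' n hn).ne_zero
    rw [hgeom, rootMultiplicity_mul hne2, rootMultiplicity_X_sub_C_self]
    have h3 : rootMultiplicity (1:ℝ) (∑ i ∈ Finset.range n, X^i) = 0 := by
      apply rootMultiplicity_eq_zero
      simp only [IsRoot, eval_finset_sum, eval_pow, eval_X, one_pow, Finset.sum_const,
        Finset.card_range, nsmul_eq_mul, mul_one]
      intro h
      have : n = 0 := by exact_mod_cast h
      omega
    omega
  omega

end PolyFacts

lemma floor_rat_eq (q : ℚ) (a b z : ℤ) (hb : 0 < b) (hq : q = (a:ℚ)/(b:ℚ))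
    (h1 : z * b ≤ a) (h2 : a < (z+1) * b) : ⌊q⌋ = z := by
  have hbQ : (0:ℚ) < (b:ℚ) := by exact_mod_cast hb
  rw [hq, Int.floor_eq_iff]
  constructor
  · rw [le_div_iff₀ hbQ]; exact_mod_cast h1
  · rw [div_lt_iff₀ hbQ]
    have : ((z:ℚ)+1) = ((z+1 : ℤ) : ℚ) := by push_cast; ring
    rw [this]
    exact_mod_cast h2

section Floors
variable (D p u : ℕ)

lemma flA (h3 : 3 ≤ D) (h2 : u < D) :
    ⌊((D * p + u : ℕ):ℚ) / ((D:ℕ):ℚ)⌋ = (p:ℤ) := by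
  refine floor_rat_eq _ ((D:ℤ) * p + u) (D:ℤ) p (by omega) (by push_cast; ring)
    (by push_cast; nlinarith) (by push_cast; nlinarith)

lemma flB1 (h3 : 3 ≤ D) (hb : 2 * u < D) :
    ⌊2 * ((D * p + u : ℕ):ℚ) / ((D:ℕ):ℚ)⌋ = 2 * (p:ℤ) := by
  refine floor_rat_eq _ (2 * ((D:ℤ) * p + u)) (D:ℤ) (2 * p) (by omega) ?_
    (by push_cast; nlinarith) (by push_cast; nlinarith)
  push_cast; ring

lemma flB2 (h3 : 3 ≤ D) (h2 : u < D) (hb : D < 2 * u) :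
    ⌊2 * ((D * p + u : ℕ):ℚ) / ((D:ℕ):ℚ)⌋ = 2 * (p:ℤ) + 1 := by
  refine floor_rat_eq _ (2 * ((D:ℤ) * p + u)) (D:ℤ) (2 * p + 1) (by omega) ?_
    (by push_cast; nlinarith) (by push_cast; nlinarith)
  push_cast; ring

lemma flC1 (h3 : 3 ≤ D) (h1 : 1 ≤ u) (hb : 2 * u < D) :
    ⌊((D * p + u : ℕ):ℚ) / ((D:ℕ):ℚ) - 1/2⌋ = (p:ℤ) - 1 := by
  refine floor_rat_eq _ (2 * ((D:ℤ) * p + u) - D) (2 * (D:ℤ)) ((p:ℤ) - 1) (by omega) ?_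
    (by push_cast; nlinarith) (by push_cast; nlinarith)
  have : ((D:ℕ):ℚ) ≠ 0 := by positivity
  push_cast
  field_simp

lemma flC2 (h3 : 3 ≤ D) (h2 : u < D) (hb : D < 2 * u) :
    ⌊((D * p + u : ℕ):ℚ) / ((D:ℕ):ℚ) - 1/2⌋ = (p:ℤ) := by
  refine floor_rat_eq _ (2 * ((D:ℤ) * p + u) - D) (2 * (D:ℤ)) (p:ℤ) (by omega) ?_
    (by push_cast; nlinarith) (by push_cast; nlinarith)
  have : ((D:ℕ):ℚ) ≠ 0 := by positivity
  push_cast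
  field_simp

lemma flD1 (h3 : 3 ≤ D) (h1 : 1 ≤ u) (hb : 2 * u < D) :
    ⌊(((D:ℕ):ℚ) - 1) * ((D * p + u : ℕ):ℚ) / ((D:ℕ):ℚ) - 1/2⌋ = ((D:ℤ) - 1) * p + u - 1 := by
  refine floor_rat_eq _ (2 * ((D:ℤ) - 1) * ((D:ℤ) * p + u) - D) (2 * (D:ℤ))
    (((D:ℤ) - 1) * p + u - 1) (by omega) ?_ (by push_cast; nlinarith) (by push_cast; nlinarith)
  have : ((D:ℕ):ℚ) ≠ 0 := by positivity
  push_cast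
  field_simp

lemma flD2 (h3 : 3 ≤ D) (h2 : u < D) (hb : D < 2 * u) :
    ⌊(((D:ℕ):ℚ) - 1) * ((D * p + u : ℕ):ℚ) / ((D:ℕ):ℚ) - 1/2⌋ = ((D:ℤ) - 1) * p + u - 2 := by
  refine floor_rat_eq _ (2 * ((D:ℤ) - 1) * ((D:ℤ) * p + u) - D) (2 * (D:ℤ))
    (((D:ℤ) - 1) * p + u - 2) (by omega) ?_ (by push_cast; nlinarith) (by push_cast; nlinarith)
  have : ((D:ℕ):ℚ) ≠ 0 := by positivity
  push_cast
  field_simp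

lemma flE1 (h3 : 3 ≤ D) (h1 : 1 ≤ u) (hb : 2 * u < D) :
    ⌊(((2*D:ℕ):ℚ) - 1) * ((D * p + u : ℕ):ℚ) / ((D:ℕ):ℚ) - 1/2⌋
      = (2*(D:ℤ) - 1) * p + 2*u - 1 := by
  refine floor_rat_eq _ (2 * (2*(D:ℤ) - 1) * ((D:ℤ) * p + u) - D) (2 * (D:ℤ))
    ((2*(D:ℤ) - 1) * p + 2*u - 1) (by omega) ?_ (by push_cast; nlinarith)
    (by push_cast; nlinarith)
  have : ((D:ℕ):ℚ) ≠ 0 := by positivity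
  push_cast
  field_simp

lemma flE2 (h3 : 3 ≤ D) (h2 : u < D) (hb : D < 2 * u) :
    ⌊(((2*D:ℕ):ℚ) - 1) * ((D * p + u : ℕ):ℚ) / ((D:ℕ):ℚ) - 1/2⌋
      = (2*(D:ℤ) - 1) * p + 2*u - 2 := by
  refine floor_rat_eq _ (2 * (2*(D:ℤ) - 1) * ((D:ℤ) * p + u) - D) (2 * (D:ℤ))
    ((2*(D:ℤ) - 1) * p + 2*u - 2) (by omega) ?_ (by push_cast; nlinarith)
    (by push_cast; nlinarith)
  have : ((D:ℕ):ℚ) ≠ 0 := by positivity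
  push_cast
  field_simp

end Floors

section FloorsOdd
variable (E p v : ℕ)

lemma flF1 (h3 : 3 ≤ E) (hb : 2 * (2*v+1) < 2*E) :
    ⌊(((E:ℕ):ℚ) - 1) * (((2*E) * p + (2*v+1) : ℕ):ℚ) / ((2*E:ℕ):ℚ)⌋
      = ((E:ℤ) - 1) * p + v := by
  refine floor_rat_eq _ (((E:ℤ) - 1) * (2*(E:ℤ) * p + (2*v+1))) (2*(E:ℤ))
    (((E:ℤ) - 1) * p + v) (by omega) ?_ (by push_cast; nlinarith) (by push_cast; nlinarith)
  have : ((E:ℕ):ℚ) ≠ 0 := by positivity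
  push_cast
  field_simp
  try ring

lemma flF2 (h3 : 3 ≤ E) (h2 : 2*v+1 < 2*E) (hb : 2*E < 2 * (2*v+1)) :
    ⌊(((E:ℕ):ℚ) - 1) * (((2*E) * p + (2*v+1) : ℕ):ℚ) / ((2*E:ℕ):ℚ)⌋
      = ((E:ℤ) - 1) * p + v - 1 := by
  refine floor_rat_eq _ (((E:ℤ) - 1) * (2*(E:ℤ) * p + (2*v+1))) (2*(E:ℤ))
    (((E:ℤ) - 1) * p + v - 1) (by omega) ?_ (by push_cast; nlinarith) (by push_cast; nlinarith)
  have : ((E:ℕ):ℚ) ≠ 0 := by positivity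
  push_cast
  field_simp
  try ring

end FloorsOdd


set_option maxHeartbeats 1600000 in
/-- Proposition 8.3, second equation: for `d ≥ 3`, with `e = d` if `4 ∣ d`, `e = 2d` if `d` is
odd, and `e = d/2` if `d ≡ 2 (mod 4)`,
`π_{κ/d}((−q)^e + q) − π_{κ/d}(q + 1) = 2κe/d − 2⌊2κ/d⌋ + 2⌊κ/d⌋`, and this quantity is
positive.  (For `d = 2`, where `e = 1`, and `κ` odd, the quantity
`2κe/d − 2⌊2κ/d⌋ + 2⌊κ/d⌋` equals `−1`.) -/
theorem piFn_shift_unitary' (κ d : ℕ) (hd : 3 ≤ d) (hκ : 1 ≤ κ) (hcop : Nat.Coprime κ d)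
    (e : ℕ)
    (he : (4 ∣ d ∧ e = d) ∨ (d % 2 = 1 ∧ e = 2 * d) ∨ (d % 4 = 2 ∧ 2 * e = d)) :
    (piFn κ d ((-X) ^ e + X) - piFn κ d (X + 1) =
      2 * (κ : ℚ) * (e : ℚ) / (d : ℚ) - 2 * (⌊2 * (κ : ℚ) / (d : ℚ)⌋ : ℚ)
        + 2 * (⌊(κ : ℚ) / (d : ℚ)⌋ : ℚ) ∧
    0 < 2 * (κ : ℚ) * (e : ℚ) / (d : ℚ) - 2 * (⌊2 * (κ : ℚ) / (d : ℚ)⌋ : ℚ)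
        + 2 * (⌊(κ : ℚ) / (d : ℚ)⌋ : ℚ)) ∧
    (∀ κ' : ℕ, Odd κ' →
      2 * (κ' : ℚ) * (1 : ℚ) / (2 : ℚ) - 2 * (⌊2 * (κ' : ℚ) / (2 : ℚ)⌋ : ℚ)
        + 2 * (⌊(κ' : ℚ) / (2 : ℚ)⌋ : ℚ) = -1) := by
  constructor
  · rcases he with ⟨h4, he1⟩ | ⟨h2, he1⟩ | ⟨h42, h2e⟩
    -- Case 1 : e = d, 4 ∣ d
    · subst d
      have hd3 : 3 ≤ e := by omega
      have hd0 : 0 < e := by omega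
      obtain ⟨p, u, hκdef, hu1, hu2, h2u⟩ :
          ∃ p u : ℕ, κ = (e) * p + u ∧ 1 ≤ u ∧ u < (e) ∧ 2 * u ≠ (e) := by
        refine ⟨κ / (e), κ % (e), (Nat.div_add_mod κ (e)).symm, ?_, Nat.mod_lt κ hd0, ?_⟩
        · rcases Nat.eq_zero_or_pos (κ % (e)) with h | h
          · exfalso
            have hdvd : (e) ∣ κ := Nat.dvd_of_mod_eq_zero h
            have hgd := Nat.dvd_gcd hdvd (dvd_refl (e))
            rw [Nat.Coprime] at hcop
            rw [hcop] at hgd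
            have := Nat.le_of_dvd one_pos hgd
            omega
          · exact h
        · intro h2ud
          have hu_dvd_κ : (κ % (e)) ∣ κ := by
            refine ⟨2 * (κ / (e)) + 1, ?_⟩
            have h1 := Nat.div_add_mod κ (e)
            have hd2u : (e) = 2 * (κ % (e)) := h2ud.symm
            calc κ = (e) * (κ / (e)) + κ % (e) := h1.symm
            _ = 2 * (κ % (e)) * (κ / (e)) + κ % (e) := by rw [← hd2u]
            _ = (κ % (e)) * (2 * (κ / (e)) + 1) := by ring
          have hu_dvd_d : (κ % (e)) ∣ (e) := ⟨2, by omega⟩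
          have hgd := Nat.dvd_gcd hu_dvd_κ hu_dvd_d
          rw [Nat.Coprime] at hcop
          rw [hcop] at hgd
          have : κ % (e) = 1 := Nat.dvd_one.mp hgd
          omega
      subst hκdef
      have hDQ : (0:ℚ) < ((e : ℕ):ℚ) := by
        have : 0 < e := hd0
        exact_mod_cast this
      have hUQ : (1:ℚ) ≤ (u:ℚ) := by exact_mod_cast hu1
      have hPQ : (0:ℚ) ≤ (p:ℚ) := by positivity
      have hDQ3 : (3:ℚ) ≤ ((e : ℕ):ℚ) := by exact_mod_cast hd3
      have hF1 := flA e p u hd3 hu2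
      have heven : Even e := Nat.even_iff.mpr (by omega)
      have hn1 : 1 ≤ e - 1 := by omega
      have hsk : e - 1 + 1 = e := by omega
      have hfact : ((-X)^e + X : ℝ[X]) = X * (X^(e-1) + 1) := by
        rw [heven.neg_pow]
        conv_lhs => rw [← hsk]
        ring
      have hdeg : ((-X)^e + X : ℝ[X]).natDegree = e := by
        rw [hfact, deg_even (e-1) hn1]; omega
      have hrm0 : rootMultiplicity (0:ℝ) ((-X)^e + X : ℝ[X]) = 1 := by
        rw [hfact]; exact rm0_even _ hn1
      have hrm1 : rootMultiplicity (1:ℝ) ((-X)^e + X : ℝ[X]) = 0 := by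
        rw [hfact]; exact rm1_even _
      have hsimp : 2 * (((e * p + u : ℕ)):ℚ) * ((e:ℕ):ℚ) / ((e:ℕ):ℚ) = 2 * (((e * p + u : ℕ)):ℚ) := by
        field_simp
      rcases Nat.lt_or_ge (2 * u) e with hb | hb'
      · have hbQ : 2 * (u:ℚ) < ((e:ℕ):ℚ) := by exact_mod_cast hb
        have hF2 := flB1 e p u hd3 hb
        have hF3 := flC1 e p u hd3 hu1 hb
        have hF4 := flD1 e p u hd3 hu1 hb
        have hAg : ((argCount ((((e) * p + u : ℕ):ℝ) / ((e : ℕ):ℝ)) (X + 1)) : ℚ)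
            = ((((p:ℤ) - 1) + 1 : ℤ) : ℚ) := by
          have h := argCount_g ((e) * p + u) (e) (by omega) (by omega)
          rw [hF3] at h
          exact_mod_cast h
        have hA : ((argCount ((((e) * p + u : ℕ):ℝ) / ((e : ℕ):ℝ)) ((-X)^(e) + X)) : ℚ)
            = (((((e:ℕ):ℤ) - 1) * p + u - 1 + 1 : ℤ) : ℚ) := by
          have h := argCount_even (e) ((e) * p + u) (e) heven (by omega) (by omega) (by omega)
          rw [hF4] at h
          exact_mod_cast h
        constructor
        · simp only [piFn, hdeg, hrm0, hrm1, gdeg, grm0, grm1, hA, hAg, hF1, hF2]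
          push_cast
          field_simp
          ring
        · rw [hF1, hF2, hsimp]
          push_cast
          nlinarith [mul_nonneg hPQ (by linarith : (0:ℚ) ≤ ((e:ℕ):ℚ) - 1)]
      · have hb : e < 2 * u := by omega
        have hbQ : ((e:ℕ):ℚ) < 2 * (u:ℚ) := by exact_mod_cast hb
        have hF2 := flB2 e p u hd3 hu2 hb
        have hF3 := flC2 e p u hd3 hu2 hb
        have hF4 := flD2 e p u hd3 hu2 hb
        have hAg : ((argCount ((((e) * p + u : ℕ):ℝ) / ((e : ℕ):ℝ)) (X + 1)) : ℚ)
            = (((p:ℤ) + 1 : ℤ) : ℚ) := by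
          have h := argCount_g ((e) * p + u) (e) (by omega) (by omega)
          rw [hF3] at h
          exact_mod_cast h
        have hA : ((argCount ((((e) * p + u : ℕ):ℝ) / ((e : ℕ):ℝ)) ((-X)^(e) + X)) : ℚ)
            = (((((e:ℕ):ℤ) - 1) * p + u - 2 + 1 : ℤ) : ℚ) := by
          have h := argCount_even (e) ((e) * p + u) (e) heven (by omega) (by omega) (by omega)
          rw [hF4] at h
          exact_mod_cast h
        constructor
        · simp only [piFn, hdeg, hrm0, hrm1, gdeg, grm0, grm1, hA, hAg, hF1, hF2]
          push_cast
          field_simp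
          ring
        · rw [hF1, hF2, hsimp]
          push_cast
          nlinarith [mul_nonneg hPQ (by linarith : (0:ℚ) ≤ ((e:ℕ):ℚ) - 1)]
    -- Case 2 : e = 2d, d odd
    · subst he1
      have hd3 : 3 ≤ d := by omega
      have hd0 : 0 < d := by omega
      obtain ⟨p, u, hκdef, hu1, hu2, h2u⟩ :
          ∃ p u : ℕ, κ = (d) * p + u ∧ 1 ≤ u ∧ u < (d) ∧ 2 * u ≠ (d) := by
        refine ⟨κ / (d), κ % (d), (Nat.div_add_mod κ (d)).symm, ?_, Nat.mod_lt κ hd0, ?_⟩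
        · rcases Nat.eq_zero_or_pos (κ % (d)) with h | h
          · exfalso
            have hdvd : (d) ∣ κ := Nat.dvd_of_mod_eq_zero h
            have hgd := Nat.dvd_gcd hdvd (dvd_refl (d))
            rw [Nat.Coprime] at hcop
            rw [hcop] at hgd
            have := Nat.le_of_dvd one_pos hgd
            omega
          · exact h
        · intro h2ud
          have hu_dvd_κ : (κ % (d)) ∣ κ := by
            refine ⟨2 * (κ / (d)) + 1, ?_⟩
            have h1 := Nat.div_add_mod κ (d)
            have hd2u : (d) = 2 * (κ % (d)) := h2ud.symm
            calc κ = (d) * (κ / (d)) + κ % (d) := h1.symm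
            _ = 2 * (κ % (d)) * (κ / (d)) + κ % (d) := by rw [← hd2u]
            _ = (κ % (d)) * (2 * (κ / (d)) + 1) := by ring
          have hu_dvd_d : (κ % (d)) ∣ (d) := ⟨2, by omega⟩
          have hgd := Nat.dvd_gcd hu_dvd_κ hu_dvd_d
          rw [Nat.Coprime] at hcop
          rw [hcop] at hgd
          have : κ % (d) = 1 := Nat.dvd_one.mp hgd
          omega
      subst hκdef
      have hDQ : (0:ℚ) < ((d : ℕ):ℚ) := by
        have : 0 < d := hd0
        exact_mod_cast this
      have hUQ : (1:ℚ) ≤ (u:ℚ) := by exact_mod_cast hu1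
      have hPQ : (0:ℚ) ≤ (p:ℚ) := by positivity
      have hDQ3 : (3:ℚ) ≤ ((d : ℕ):ℚ) := by exact_mod_cast hd3
      have hF1 := flA d p u hd3 hu2
      have heven : Even (2 * d) := even_two_mul d
      have hn1 : 1 ≤ 2 * d - 1 := by omega
      have hsk : 2 * d - 1 + 1 = 2 * d := by omega
      have hfact : ((-X)^(2*d) + X : ℝ[X]) = X * (X^(2*d-1) + 1) := by
        rw [heven.neg_pow]
        conv_lhs => rw [← hsk]
        ring
      have hdeg : ((-X)^(2*d) + X : ℝ[X]).natDegree = 2*d := by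
        rw [hfact, deg_even (2*d-1) hn1]; omega
      have hrm0 : rootMultiplicity (0:ℝ) ((-X)^(2*d) + X : ℝ[X]) = 1 := by
        rw [hfact]; exact rm0_even _ hn1
      have hrm1 : rootMultiplicity (1:ℝ) ((-X)^(2*d) + X : ℝ[X]) = 0 := by
        rw [hfact]; exact rm1_even _
      have hsimp : 2 * (((d * p + u : ℕ)):ℚ) * ((2*d:ℕ):ℚ) / ((d:ℕ):ℚ) = 4 * (((d * p + u : ℕ)):ℚ) := by
        push_cast
        field_simp
        ring
      rcases Nat.lt_or_ge (2 * u) d with hb | hb'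
      · have hbQ : 2 * (u:ℚ) < ((d:ℕ):ℚ) := by exact_mod_cast hb
        have hF2 := flB1 d p u hd3 hb
        have hF3 := flC1 d p u hd3 hu1 hb
        have hF4 := flE1 d p u hd3 hu1 hb
        have hAg : ((argCount ((((d) * p + u : ℕ):ℝ) / ((d : ℕ):ℝ)) (X + 1)) : ℚ)
            = ((((p:ℤ) - 1) + 1 : ℤ) : ℚ) := by
          have h := argCount_g ((d) * p + u) (d) (by omega) (by omega)
          rw [hF3] at h
          exact_mod_cast h
        have hA : ((argCount ((((d) * p + u : ℕ):ℝ) / ((d : ℕ):ℝ)) ((-X)^(2*d) + X)) : ℚ)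
            = (((2*((d:ℕ):ℤ) - 1) * p + 2*u - 1 + 1 : ℤ) : ℚ) := by
          have h := argCount_even (2*d) ((d) * p + u) (d) heven (by omega) (by omega) (by omega)
          rw [hF4] at h
          exact_mod_cast h
        constructor
        · simp only [piFn, hdeg, hrm0, hrm1, gdeg, grm0, grm1, hA, hAg, hF1, hF2]
          push_cast
          field_simp
          ring
        · rw [hF1, hF2, hsimp]
          push_cast
          nlinarith [mul_nonneg hPQ (by linarith : (0:ℚ) ≤ ((d:ℕ):ℚ) - 1)]
      · have hb : d < 2 * u := by omega
        have hbQ : ((d:ℕ):ℚ) < 2 * (u:ℚ) := by exact_mod_cast hb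
        have hF2 := flB2 d p u hd3 hu2 hb
        have hF3 := flC2 d p u hd3 hu2 hb
        have hF4 := flE2 d p u hd3 hu2 hb
        have hAg : ((argCount ((((d) * p + u : ℕ):ℝ) / ((d : ℕ):ℝ)) (X + 1)) : ℚ)
            = (((p:ℤ) + 1 : ℤ) : ℚ) := by
          have h := argCount_g ((d) * p + u) (d) (by omega) (by omega)
          rw [hF3] at h
          exact_mod_cast h
        have hA : ((argCount ((((d) * p + u : ℕ):ℝ) / ((d : ℕ):ℝ)) ((-X)^(2*d) + X)) : ℚ)
            = (((2*((d:ℕ):ℤ) - 1) * p + 2*u - 2 + 1 : ℤ) : ℚ) := by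
          have h := argCount_even (2*d) ((d) * p + u) (d) heven (by omega) (by omega) (by omega)
          rw [hF4] at h
          exact_mod_cast h
        constructor
        · simp only [piFn, hdeg, hrm0, hrm1, gdeg, grm0, grm1, hA, hAg, hF1, hF2]
          push_cast
          field_simp
          ring
        · rw [hF1, hF2, hsimp]
          push_cast
          nlinarith [mul_nonneg hPQ (by linarith : (0:ℚ) ≤ ((d:ℕ):ℚ) - 1)]
    -- Case 3 : d = 2e
    · have he1 : d = 2 * e := by omega
      subst he1
      have hd3 : 3 ≤ 2*e := by omega
      have hd0 : 0 < 2*e := by omega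
      obtain ⟨p, u, hκdef, hu1, hu2, h2u⟩ :
          ∃ p u : ℕ, κ = (2*e) * p + u ∧ 1 ≤ u ∧ u < (2*e) ∧ 2 * u ≠ (2*e) := by
        refine ⟨κ / (2*e), κ % (2*e), (Nat.div_add_mod κ (2*e)).symm, ?_, Nat.mod_lt κ hd0, ?_⟩
        · rcases Nat.eq_zero_or_pos (κ % (2*e)) with h | h
          · exfalso
            have hdvd : (2*e) ∣ κ := Nat.dvd_of_mod_eq_zero h
            have hgd := Nat.dvd_gcd hdvd (dvd_refl (2*e))
            rw [Nat.Coprime] at hcop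
            rw [hcop] at hgd
            have := Nat.le_of_dvd one_pos hgd
            omega
          · exact h
        · intro h2ud
          have hu_dvd_κ : (κ % (2*e)) ∣ κ := by
            refine ⟨2 * (κ / (2*e)) + 1, ?_⟩
            have h1 := Nat.div_add_mod κ (2*e)
            have hd2u : (2*e) = 2 * (κ % (2*e)) := h2ud.symm
            calc κ = (2*e) * (κ / (2*e)) + κ % (2*e) := h1.symm
            _ = 2 * (κ % (2*e)) * (κ / (2*e)) + κ % (2*e) := by rw [← hd2u]
            _ = (κ % (2*e)) * (2 * (κ / (2*e)) + 1) := by ring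
          have hu_dvd_d : (κ % (2*e)) ∣ (2*e) := ⟨2, by omega⟩
          have hgd := Nat.dvd_gcd hu_dvd_κ hu_dvd_d
          rw [Nat.Coprime] at hcop
          rw [hcop] at hgd
          have : κ % (2*e) = 1 := Nat.dvd_one.mp hgd
          omega
      subst hκdef
      have he3 : 3 ≤ e := by omega
      have hodd : Odd e := Nat.odd_iff.mpr (by omega)
      have huodd : u % 2 = 1 := by
        rcases Nat.even_or_odd u with hev | hod
        · exfalso
          have h2k : 2 ∣ ((2*e) * p + u) := by
            obtain ⟨w, hw⟩ := hev
            exact ⟨e * p + w, by rw [hw]; ring⟩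
          have h2d : (2:ℕ) ∣ (2*e) := ⟨e, rfl⟩
          have hgd := Nat.dvd_gcd h2k h2d
          rw [Nat.Coprime] at hcop
          rw [hcop] at hgd
          omega
        · exact Nat.odd_iff.mp hod
      obtain ⟨v, hv⟩ : ∃ v, u = 2 * v + 1 := ⟨u / 2, by omega⟩
      subst hv
      have hDQ : (0:ℚ) < ((e : ℕ):ℚ) := by
        have : 0 < e := by omega
        exact_mod_cast this
      have hPQ : (0:ℚ) ≤ (p:ℚ) := by positivity
      have hVQ : (0:ℚ) ≤ (v:ℚ) := by positivity
      have he3Q : (3:ℚ) ≤ ((e : ℕ):ℚ) := by exact_mod_cast he3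
      have hF1 := flA (2*e) p (2*v+1) hd3 hu2
      have hn1 : 1 ≤ e - 1 := by omega
      have hsk : e - 1 + 1 = e := by omega
      have hfact : ((-X)^e + X : ℝ[X]) = C (-1) * (X * (X^(e-1) - 1)) := by
        rw [hodd.neg_pow]
        conv_lhs => rw [← hsk]
        rw [map_neg, C_1]
        ring
      have hdeg : ((-X)^e + X : ℝ[X]).natDegree = e := by
        rw [hfact, deg_odd (e-1) hn1]; omega
      have hrm0 : rootMultiplicity (0:ℝ) ((-X)^e + X : ℝ[X]) = 1 := by
        rw [hfact]; exact rm0_odd _ hn1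
      have hrm1 : rootMultiplicity (1:ℝ) ((-X)^e + X : ℝ[X]) = 1 := by
        rw [hfact]; exact rm1_odd _ hn1
      have hsimp : 2 * ((((2*e) * p + (2*v+1) : ℕ)):ℚ) * ((e:ℕ):ℚ) / ((2*e:ℕ):ℚ)
          = ((((2*e) * p + (2*v+1) : ℕ)):ℚ) := by
        have heQ : ((e:ℕ):ℚ) ≠ 0 := by positivity
        push_cast
        field_simp
      rcases Nat.lt_or_ge (2 * (2*v+1)) (2*e) with hb | hb'
      · have hF2 := flB1 (2*e) p (2*v+1) hd3 hb
        have hF3 := flC1 (2*e) p (2*v+1) hd3 (by omega) hb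
        have hF6 := flF1 e p v he3 hb
        have hAg : ((argCount ((((2*e) * p + (2*v+1) : ℕ):ℝ) / ((2*e : ℕ):ℝ)) (X + 1)) : ℚ)
            = ((((p:ℤ) - 1) + 1 : ℤ) : ℚ) := by
          have h := argCount_g ((2*e) * p + (2*v+1)) (2*e) (by omega) (by omega)
          rw [hF3] at h
          exact_mod_cast h
        have hA : ((argCount ((((2*e) * p + (2*v+1) : ℕ):ℝ) / ((2*e : ℕ):ℝ)) ((-X)^(e) + X)) : ℚ)
            = (((((e:ℕ):ℤ) - 1) * p + v : ℤ) : ℚ) := by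
          have h := argCount_odd (e) ((2*e) * p + (2*v+1)) (2*e) hodd (by omega) (by omega) (by omega)
          rw [hF6] at h
          exact_mod_cast h
        constructor
        · simp only [piFn, hdeg, hrm0, hrm1, gdeg, grm0, grm1, hA, hAg, hF1, hF2]
          push_cast
          field_simp
          ring
        · rw [hF1, hF2, hsimp]
          push_cast
          nlinarith [mul_nonneg hPQ (by linarith : (0:ℚ) ≤ ((e:ℕ):ℚ) - 1)]
      · have hb : 2*e < 2 * (2*v+1) := by omega
        have hF2 := flB2 (2*e) p (2*v+1) hd3 hu2 hb
        have hF3 := flC2 (2*e) p (2*v+1) hd3 hu2 hb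
        have hF6 := flF2 e p v he3 hu2 hb
        have hveQ : ((e:ℕ):ℚ) + 1 ≤ 2*(v:ℚ) + 1 := by
          have : e + 1 ≤ 2*v+1 := by omega
          exact_mod_cast this
        have hAg : ((argCount ((((2*e) * p + (2*v+1) : ℕ):ℝ) / ((2*e : ℕ):ℝ)) (X + 1)) : ℚ)
            = (((p:ℤ) + 1 : ℤ) : ℚ) := by
          have h := argCount_g ((2*e) * p + (2*v+1)) (2*e) (by omega) (by omega)
          rw [hF3] at h
          exact_mod_cast h
        have hA : ((argCount ((((2*e) * p + (2*v+1) : ℕ):ℝ) / ((2*e : ℕ):ℝ)) ((-X)^(e) + X)) : ℚ)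
            = (((((e:ℕ):ℤ) - 1) * p + v - 1 : ℤ) : ℚ) := by
          have h := argCount_odd (e) ((2*e) * p + (2*v+1)) (2*e) hodd (by omega) (by omega) (by omega)
          rw [hF6] at h
          exact_mod_cast h
        constructor
        · simp only [piFn, hdeg, hrm0, hrm1, gdeg, grm0, grm1, hA, hAg, hF1, hF2]
          push_cast
          field_simp
          ring
        · rw [hF1, hF2, hsimp]
          push_cast
          nlinarith [mul_nonneg hPQ (by linarith : (0:ℚ) ≤ ((e:ℕ):ℚ) - 1), hveQ]
  · rintro κ' ⟨m, hm⟩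
    have hm' : κ' = 2 * m + 1 := by omega
    subst hm'
    have h1 : (2 * ((2*m+1 : ℕ):ℚ) / (2:ℚ)) = ((2*m+1 : ℕ):ℚ) := by ring
    have h2 : ⌊((2*m+1 : ℕ):ℚ)⌋ = (2*(m:ℤ)+1 : ℤ) := by
      rw [show ((2*m+1 : ℕ):ℚ) = ((2*(m:ℤ)+1 : ℤ):ℚ) by push_cast; ring, Int.floor_intCast]
    have h3 : ⌊((2*m+1 : ℕ):ℚ) / (2:ℚ)⌋ = (m:ℤ) := by
      refine floor_rat_eq _ (2*(m:ℤ)+1) 2 m (by omega) (by push_cast; ring) (by omega) (by omega)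
    rw [h1, h2, h3]
    push_cast
    ring
end

section
/- Let d ≥ 2 and κ ≥ 1 be coprime integers, and let e = d if 4 divides d, e = 2d if d is odd, and e = d/2 if d ≡ 2 (mod 4). For all integers n, m ≥ 0: π_{κ/d}(∏_{i=n+1}^{n+d}(q^i − 1)) − π_{κ/d}(∏_{i=m+1}^{m+d}(q^i − 1)) = 2κ(n−m), and π_{κ/d}(∏_{i=n+1}^{n+e}((−q)^i − 1)) − π_{κ/d}(∏_{i=m+1}^{m+e}((−q)^i − 1)) = 2κ(n−m)e/d. -/
open Polynomial

lemma count_exp (L a : ℝ) (ha0 : 0 < a) (ha2 : a ≤ 2 * Real.pi) :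
    Nat.card {l : ℝ // 0 < l ∧ l ≤ L ∧ Complex.exp ((l : ℂ) * Complex.I) = Complex.exp ((a : ℂ) * Complex.I)}
      = ⌊(L - a) / (2 * Real.pi) + 1⌋₊ := by
  have hpi := Real.pi_pos
  have h2pi : (0:ℝ) < 2 * Real.pi := by linarith
  have hset : {l : ℝ | 0 < l ∧ l ≤ L ∧ Complex.exp ((l : ℂ) * Complex.I) = Complex.exp ((a : ℂ) * Complex.I)}
      = (fun k : ℕ => a + 2 * Real.pi * k) '' {k : ℕ | (k : ℝ) ≤ (L - a) / (2 * Real.pi)} := by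
    ext l
    simp only [Set.mem_setOf_eq, Set.mem_image]
    constructor
    · rintro ⟨hl0, hlL, hexp⟩
      rw [Complex.exp_eq_exp_iff_exists_int] at hexp
      obtain ⟨n, hn⟩ := hexp
      have hl : l = a + 2 * Real.pi * n := by
        have h1 : ((l : ℂ)) = ((a + 2 * Real.pi * n : ℝ) : ℂ) := by
          have hI : (Complex.I : ℂ) ≠ 0 := Complex.I_ne_zero
          have h2 : (l : ℂ) * Complex.I = ((a : ℂ) + 2 * Real.pi * n) * Complex.I := by
            push_cast at hn ⊢; linear_combination hn
          have := mul_right_cancel₀ hI h2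
          push_cast
          linear_combination this
        exact_mod_cast h1
      have hn0 : 0 ≤ n := by
        by_contra h
        push_neg at h
        have h1 : (n : ℝ) ≤ -1 := by exact_mod_cast Int.cast_le.mpr (by omega : n ≤ -1)
        nlinarith
      have hcast : ((n.toNat : ℕ) : ℝ) = (n : ℝ) := by exact_mod_cast Int.toNat_of_nonneg hn0
      refine ⟨n.toNat, ?_, ?_⟩
      · show ((n.toNat : ℕ) : ℝ) ≤ _
        rw [hcast, le_div_iff₀ h2pi]
        nlinarith
      · show a + 2 * Real.pi * ((n.toNat : ℕ) : ℝ) = l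
        rw [hcast]; linarith [hl]
    · rintro ⟨k, hk, rfl⟩
      rw [le_div_iff₀ h2pi] at hk
      refine ⟨by positivity, by linarith, ?_⟩
      rw [Complex.exp_eq_exp_iff_exists_int]
      exact ⟨k, by push_cast; ring⟩
  have hinj : Function.Injective (fun k : ℕ => a + 2 * Real.pi * k) := by
    intro i j hij
    simp only at hij
    have h1 : (i : ℝ) = j := mul_left_cancel₀ (ne_of_gt h2pi) (by linarith)
    exact_mod_cast h1
  have hcard : Nat.card {l : ℝ // 0 < l ∧ l ≤ L ∧ Complex.exp ((l : ℂ) * Complex.I) = Complex.exp ((a : ℂ) * Complex.I)}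
      = Nat.card {k : ℕ | (k : ℝ) ≤ (L - a) / (2 * Real.pi)} := by
    rw [← Nat.card_image_of_injective hinj, ← hset]
    rfl
  rw [hcard]
  by_cases hLa : 0 ≤ (L - a) / (2 * Real.pi)
  · have h1 : {k : ℕ | (k : ℝ) ≤ (L - a) / (2 * Real.pi)} = Set.Iic ⌊(L - a) / (2 * Real.pi)⌋₊ := by
      ext k; simp [Nat.le_floor_iff hLa]
    rw [h1]
    have h2 : ⌊(L - a) / (2 * Real.pi) + 1⌋₊ = ⌊(L - a) / (2 * Real.pi)⌋₊ + 1 := by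
      exact_mod_cast Nat.floor_add_natCast hLa 1
    rw [h2]
    simp [Nat.card_eq_card_toFinset]
  · push_neg at hLa
    have h1 : {k : ℕ | (k : ℝ) ≤ (L - a) / (2 * Real.pi)} = ∅ := by
      ext k; simp only [Set.mem_setOf_eq, Set.mem_empty_iff_false, iff_false, not_le]
      calc (L - a) / (2 * Real.pi) < 0 := hLa
        _ ≤ k := by positivity
    rw [h1]
    have h2 : ⌊(L - a) / (2 * Real.pi) + 1⌋₊ = 0 := by
      apply Nat.floor_eq_zero.mpr; linarith
    simp [h2]


lemma sum_div_id (N : ℕ) (hN : 1 ≤ N) : ∀ x : ℕ, ∑ k ∈ Finset.range N, (x + k) / N = x := by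
  intro x
  induction x with
  | zero => 
    apply Finset.sum_eq_zero
    intro k hk
    simp only [Finset.mem_range] at hk
    simpa using Nat.div_eq_of_lt hk
  | succ x ih =>
    have h1 := Finset.sum_range_succ' (fun k => (x + k) / N) N
    have h2 := Finset.sum_range_succ (fun k => (x + k) / N) N
    have h3 : (x + N) / N = x / N + 1 := Nat.add_div_right x hN
    have h4 : ∑ k ∈ Finset.range N, (x + 1 + k) / N = ∑ k ∈ Finset.range N, (x + (k + 1)) / N := by
      apply Finset.sum_congr rfl; intro k _; ring_nf
    simp only [Nat.add_zero] at h1 h2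
    omega

lemma argCount_X_pow_sub_one (t : ℝ) (ht : 0 < t) (N : ℕ) (hN : 1 ≤ N) :
    argCount t (X ^ N - 1) = ⌊(N : ℝ) * t⌋₊ := by
  have hpi := Real.pi_pos
  have hNR : (0:ℝ) < N := by exact_mod_cast hN
  have hNne : (N:ℂ) ≠ 0 := by exact_mod_cast (by omega : N ≠ 0)
  set x := ⌊(N : ℝ) * t⌋₊ with hxdef
  have hNt0 : (0:ℝ) ≤ (N:ℝ) * t := by positivity
  -- the mapped polynomial
  have hmap : (X ^ N - 1 : Polynomial ℝ).map (algebraMap ℝ ℂ) = X ^ N - C 1 := by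
    simp [Polynomial.map_sub, Polynomial.map_pow, Polynomial.map_one]
  have hζ := Complex.isPrimitiveRoot_exp N (by omega)
  set ζ : ℂ := Complex.exp (2 * Real.pi * Complex.I / N) with hζdef
  have hroots : (X ^ N - C 1 : Polynomial ℂ).roots = (Multiset.range N).map (fun j => ζ ^ j * 1) := by
    rw [← Polynomial.nthRoots]
    exact hζ.nthRoots_eq (one_pow N)
  -- counting function
  set cnt : ℂ → ℕ := fun ξ =>
    Nat.card {l : ℝ // 0 < l ∧ l ≤ 2 * Real.pi * t ∧ Complex.exp ((l : ℂ) * Complex.I) = ξ} with hcnt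
  have hsum : argCount t (X ^ N - 1) = ∑ j ∈ Finset.range N, cnt (ζ ^ j) := by
    rw [argCount, hmap, hroots, Multiset.map_map]
    simp only [Function.comp, mul_one]
    rw [Finset.sum, Finset.range_val]
  rw [hsum]
  -- value of each term
  have hterm : ∀ j : ℕ, 1 ≤ j → j ≤ N → cnt (ζ ^ j) = (x + (N - j)) / N := by
    intro j hj1 hjN
    have hjR : (1:ℝ) ≤ (j:ℝ) := by exact_mod_cast hj1
    have hjNR : (j:ℝ) ≤ (N:ℝ) := by exact_mod_cast hjN
    have ha : ζ ^ j = Complex.exp (((2 * Real.pi * j / N : ℝ) : ℂ) * Complex.I) := by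
      rw [hζdef, ← Complex.exp_nat_mul]
      congr 1
      push_cast
      field_simp
    rw [hcnt]
    simp only
    rw [ha, count_exp (2 * Real.pi * t) (2 * Real.pi * j / N)
      (by positivity)
      (by rw [div_le_iff₀ hNR]; nlinarith)]
    have harg : (2 * Real.pi * t - 2 * Real.pi * j / N) / (2 * Real.pi) + 1
        = ((N:ℝ) * t + ((N - j : ℕ) : ℝ)) / N := by
      have : ((N - j : ℕ) : ℝ) = (N:ℝ) - (j:ℝ) := by
        push_cast [Nat.cast_sub hjN]; ring
      rw [this]
      field_simp
      ring
    rw [harg, Nat.floor_div_natCast, Nat.floor_add_natCast hNt0]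
  have hterm0 : cnt (ζ ^ 0) = x / N := by
    have ha : ζ ^ 0 = Complex.exp (((2 * Real.pi : ℝ) : ℂ) * Complex.I) := by
      rw [pow_zero]
      push_cast
      rw [Complex.exp_two_pi_mul_I]
    rw [hcnt]
    simp only
    rw [ha, count_exp (2 * Real.pi * t) (2 * Real.pi) (by positivity) le_rfl]
    have harg : (2 * Real.pi * t - 2 * Real.pi) / (2 * Real.pi) + 1 = ((N:ℝ) * t) / N := by
      field_simp
      ring
    rw [harg]
    have : ((N:ℝ) * t) / N = ((N:ℝ) * t) / (N:ℕ) := by norm_num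
    rw [this, Nat.floor_div_natCast]
  -- sum gymnastics
  obtain ⟨M, rfl⟩ : ∃ M, N = M + 1 := ⟨N - 1, by omega⟩
  rw [Finset.sum_range_succ' (fun j => cnt (ζ ^ j)) M]
  rw [hterm0]
  have h1 : ∑ j ∈ Finset.range M, cnt (ζ ^ (j + 1)) = ∑ j ∈ Finset.range M, (x + (M - j)) / (M+1) := by
    apply Finset.sum_congr rfl
    intro j hj
    simp only [Finset.mem_range] at hj
    rw [hterm (j+1) (by omega) (by omega)]
    congr 2
    omega
  rw [h1]
  have h2 : ∑ j ∈ Finset.range M, (x + (M - j)) / (M+1)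
      = ∑ j ∈ Finset.range M, (x + (j + 1)) / (M+1) := by
    have := Finset.sum_range_reflect (fun k => (x + (k + 1)) / (M+1)) M
    rw [← this]
    apply Finset.sum_congr rfl
    intro j hj
    simp only [Finset.mem_range] at hj
    congr 2
    omega
  rw [h2]
  have h3 := Finset.sum_range_succ' (fun k => (x + k) / (M+1)) M
  have h4 := sum_div_id (M+1) (by omega) x
  simp only [Nat.add_zero] at h3
  omega


lemma argCount_mul (t : ℝ) {f g : Polynomial ℝ} (hf : f ≠ 0) (hg : g ≠ 0) :
    argCount t (f * g) = argCount t f + argCount t g := by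
  unfold argCount
  rw [Polynomial.map_mul, Polynomial.roots_mul
    (mul_ne_zero (Polynomial.map_ne_zero hf) (Polynomial.map_ne_zero hg)),
    Multiset.map_add, Multiset.sum_add]

lemma piFn_mul (κ d : ℕ) {f g : Polynomial ℝ} (hf : f ≠ 0) (hg : g ≠ 0) :
    piFn κ d (f * g) = piFn κ d f + piFn κ d g := by
  unfold piFn
  rw [Polynomial.rootMultiplicity_mul (x := 0) (mul_ne_zero hf hg),
    Polynomial.rootMultiplicity_mul (x := 1) (mul_ne_zero hf hg),
    Polynomial.natDegree_mul hf hg, argCount_mul _ hf hg]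
  push_cast
  ring

lemma piFn_neg (κ d : ℕ) (f : Polynomial ℝ) (hf : f ≠ 0) : piFn κ d (-f) = piFn κ d f := by
  have hC : (C (-1 : ℝ)) * f = -f := by simp
  have h0 : ∀ x : ℝ, rootMultiplicity x (-f) = rootMultiplicity x f := by
    intro x
    rw [← hC, Polynomial.rootMultiplicity_mul (by rw [hC]; exact neg_ne_zero.mpr hf),
      Polynomial.rootMultiplicity_C, zero_add]
  unfold piFn
  rw [h0, h0, Polynomial.natDegree_neg]
  congr 2
  unfold argCount
  rw [Polynomial.map_neg, Polynomial.roots_neg]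

lemma piFn_prod (κ d : ℕ) (s : Finset ℕ) (f : ℕ → Polynomial ℝ) (hf : ∀ i ∈ s, f i ≠ 0) :
    piFn κ d (∏ i ∈ s, f i) = ∑ i ∈ s, piFn κ d (f i) := by
  induction s using Finset.cons_induction with
  | empty =>
    simp only [Finset.prod_empty, Finset.sum_empty]
    unfold piFn argCount
    simp [Polynomial.rootMultiplicity_eq_zero (by simp [Polynomial.IsRoot] : ¬(1:Polynomial ℝ).IsRoot 0),
      Polynomial.rootMultiplicity_eq_zero (by simp [Polynomial.IsRoot] : ¬(1:Polynomial ℝ).IsRoot 1)]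
  | cons a s ha ih =>
    rw [Finset.prod_cons, Finset.sum_cons,
      piFn_mul κ d (hf a (Finset.mem_cons_self a s))
        (Finset.prod_ne_zero_iff.mpr fun i hi => hf i (Finset.mem_cons_of_mem hi)),
      ih (fun i hi => hf i (Finset.mem_cons_of_mem hi))]

def Hval (κ d i : ℕ) : ℚ := (i : ℚ) * κ / d + ((i * κ / d : ℕ) : ℚ) + 1/2

lemma X_pow_sub_one_ne_zero {i : ℕ} (hi : 1 ≤ i) : (X ^ i - 1 : Polynomial ℝ) ≠ 0 := by
  intro h
  have := congrArg (Polynomial.eval 0) h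
  simp [zero_pow (by omega : i ≠ 0)] at this

lemma rootMult_one_X_pow_sub_one {i : ℕ} (hi : 1 ≤ i) :
    rootMultiplicity 1 (X ^ i - 1 : Polynomial ℝ) = 1 := by
  have hgeom := geom_sum_mul (X : Polynomial ℝ) i
  rw [← hgeom, Polynomial.rootMultiplicity_mul (by rw [hgeom]; exact X_pow_sub_one_ne_zero hi)]
  have h1 : rootMultiplicity 1 ((X : Polynomial ℝ) - 1) = 1 := by
    have : ((X : Polynomial ℝ) - 1) = X - C 1 := by simp
    rw [this, Polynomial.rootMultiplicity_X_sub_C_self]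
  have h2 : rootMultiplicity 1 (∑ k ∈ Finset.range i, (X : Polynomial ℝ) ^ k) = 0 := by
    apply Polynomial.rootMultiplicity_eq_zero
    simp only [Polynomial.IsRoot, Polynomial.eval_finset_sum, Polynomial.eval_pow,
      Polynomial.eval_X, one_pow, Finset.sum_const, Finset.card_range, nsmul_eq_mul, mul_one]
    exact_mod_cast (by positivity : (0:ℝ) < (i:ℝ)).ne'
  rw [h1, h2]

lemma piFn_X_pow_sub_one (κ d : ℕ) (hd : 1 ≤ d) (hκ : 1 ≤ κ) {i : ℕ} (hi : 1 ≤ i) :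
    piFn κ d (X ^ i - 1) = Hval κ d i := by
  have hdR : (0:ℝ) < d := by exact_mod_cast hd
  have hκR : (0:ℝ) < κ := by exact_mod_cast hκ
  unfold piFn Hval
  have h0 : rootMultiplicity 0 (X ^ i - 1 : Polynomial ℝ) = 0 := by
    apply Polynomial.rootMultiplicity_eq_zero
    simp [Polynomial.IsRoot, zero_pow (by omega : i ≠ 0)]
  have hdeg : (X ^ i - 1 : Polynomial ℝ).natDegree = i := by
    have : (X ^ i - 1 : Polynomial ℝ) = X ^ i - C 1 := by simp
    rw [this, Polynomial.natDegree_X_pow_sub_C]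
  have harg : argCount ((κ : ℝ) / (d : ℝ)) (X ^ i - 1) = i * κ / d := by
    rw [argCount_X_pow_sub_one _ (by positivity) i hi]
    have : (i : ℝ) * ((κ : ℝ) / (d : ℝ)) = ((i * κ : ℕ) : ℝ) / ((d : ℕ) : ℝ) := by
      push_cast; ring
    rw [this, Nat.floor_div_natCast, Nat.floor_natCast]
  rw [h0, hdeg, rootMult_one_X_pow_sub_one hi, harg]
  push_cast
  ring



def Gval (κ d i : ℕ) : ℚ := if Even i then Hval κ d i else Hval κ d (2*i) - Hval κ d i

lemma Hstep (κ d : ℕ) (hd : 1 ≤ d) (i : ℕ) : Hval κ d (i + d) = Hval κ d i + 2 * κ := by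
  have hdQ : (d : ℚ) ≠ 0 := by exact_mod_cast (by omega : d ≠ 0)
  have hnat : (i + d) * κ / d = i * κ / d + κ := by
    have h1 : (i + d) * κ = i * κ + d * κ := by ring
    rw [h1, Nat.add_mul_div_left (i*κ) κ (by omega : 0 < d)]
  unfold Hval
  rw [hnat]
  push_cast
  field_simp
  ring

lemma div2_lem (s e : ℕ) (he : 1 ≤ e) : (s + e) / (2 * e) + s / (2 * e) = s / e := by
  have h1 : (s + e) / (2 * e) = (s / e + 1) / 2 := by
    rw [mul_comm 2 e, ← Nat.div_div_eq_div_mul, Nat.add_div_right _ (by omega : 0 < e)]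
  have h2 : s / (2 * e) = s / e / 2 := by
    rw [mul_comm 2 e, ← Nat.div_div_eq_div_mul]
  omega

lemma oddstep_lem (s e κ : ℕ) (he : 1 ≤ e) (hκ : κ % 2 = 1) :
    (s + e * κ) / (2 * e) = (s + e) / (2 * e) + κ / 2 := by
  have h1 : s + e * κ = s + e + 2 * e * (κ / 2) := by
    have : κ = 2 * (κ / 2) + 1 := by omega
    calc s + e * κ = s + e * (2 * (κ / 2) + 1) := by rw [← this]
      _ = s + e + 2 * e * (κ / 2) := by ring
  rw [h1, Nat.add_mul_div_left _ _ (by omega : 0 < 2 * e)]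

lemma Gstep (κ d e : ℕ) (hd : 2 ≤ d) (hκ : 1 ≤ κ) (hcop : Nat.Coprime κ d)
    (he : (4 ∣ d ∧ e = d) ∨ (d % 2 = 1 ∧ e = 2 * d) ∨ (d % 4 = 2 ∧ 2 * e = d)) (i : ℕ) :
    Gval κ d (i + e) = Gval κ d i + 2 * κ * e / d := by
  have hdQ : (d : ℚ) ≠ 0 := by exact_mod_cast (by omega : d ≠ 0)
  rcases he with ⟨h4, hed⟩ | ⟨hodd, hed⟩ | ⟨h42, hde⟩
  · -- e = d, 4 ∣ d
    rw [hed]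
    have hde : Even d := (even_iff_two_dvd).mpr (dvd_trans ⟨2, rfl⟩ h4)
    have hpar : Even (i + d) ↔ Even i := by
      rw [Nat.even_add]; tauto
    have hc : 2 * (κ:ℚ) * d / d = 2 * κ := by field_simp
    rw [hc]
    by_cases hi : Even i
    · rw [Gval, Gval, if_pos (hpar.mpr hi), if_pos hi, Hstep κ d (by omega)]
    · rw [Gval, Gval, if_neg (fun h => hi (hpar.mp h)), if_neg hi]
      have h2 : 2 * (i + d) = 2 * i + d + d := by ring
      rw [h2, Hstep κ d (by omega), Hstep κ d (by omega), Hstep κ d (by omega)]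
      ring
  · -- e = 2d, d odd
    rw [hed]
    have hpar : Even (i + 2 * d) ↔ Even i := by
      rw [Nat.even_add]; simp [Nat.even_mul]
    have hc : 2 * (κ:ℚ) * ((2 * d : ℕ) : ℚ) / d = 4 * κ := by push_cast; field_simp; ring
    rw [hc]
    have hH2 : ∀ j, Hval κ d (j + 2 * d) = Hval κ d j + 4 * κ := by
      intro j
      have : j + 2 * d = j + d + d := by ring
      rw [this, Hstep κ d (by omega), Hstep κ d (by omega)]; ring
    by_cases hi : Even i
    · rw [Gval, Gval, if_pos (hpar.mpr hi), if_pos hi, hH2]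
    · rw [Gval, Gval, if_neg (fun h => hi (hpar.mp h)), if_neg hi]
      have h2 : 2 * (i + 2 * d) = 2 * i + 2 * d + 2 * d := by ring
      rw [h2, hH2, hH2, hH2]
      ring
  · -- 2e = d, d % 4 = 2
    obtain rfl : d = 2 * e := hde.symm
    have he1 : 1 ≤ e := by omega
    have heodd : e % 2 = 1 := by omega
    have hκodd : κ % 2 = 1 := by
      have h2 : ¬ (2 ∣ κ) := by
        intro h2
        have h3 : 2 ∣ Nat.gcd κ (2 * e) := Nat.dvd_gcd h2 ⟨e, rfl⟩
        rw [hcop] at h3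
        omega
      omega
    have hpar : Even (i + e) ↔ ¬ Even i := by
      simp only [Nat.even_add, Nat.even_iff]
      omega
    have hc : 2 * (κ:ℚ) * e / (2 * e : ℕ) = κ := by
      have heQ : ((e:ℚ)) ≠ 0 := by exact_mod_cast (by omega : e ≠ 0)
      push_cast; field_simp
    rw [hc]
    -- nat division facts
    have hA : (2 * (i + e)) * κ / (2 * e) = i * κ / e + κ := by
      have h1 : (2 * (i + e)) * κ = 2 * ((i * κ + e * κ)) := by ring
      rw [h1, Nat.mul_div_mul_left _ _ (by omega : 0 < 2),
        Nat.add_mul_div_left _ _ (by omega : 0 < e)]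
    have hB : (i + e) * κ / (2 * e) = (i * κ + e) / (2 * e) + κ / 2 := by
      have h1 : (i + e) * κ = i * κ + e * κ := by ring
      rw [h1, oddstep_lem _ _ _ he1 hκodd]
    have hC : (i * κ + e) / (2 * e) + i * κ / (2 * e) = i * κ / e := div2_lem _ _ he1
    have hD : 2 * i * κ / (2 * e) = i * κ / e := by
      have h1 : 2 * i * κ = 2 * (i * κ) := by ring
      rw [h1, Nat.mul_div_mul_left _ _ (by omega : 0 < 2)]
    -- cast to ℚ
    have cA2 : ((2 * (i + e) * κ / (2 * e) : ℕ) : ℚ) = ((i * κ / e : ℕ) : ℚ) + κ := by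
      rw [hA]; push_cast; ring
    have cB : (((i + e) * κ / (2 * e) : ℕ) : ℚ) = (((i * κ + e) / (2 * e) : ℕ) : ℚ) + ((κ / 2 : ℕ) : ℚ) := by
      rw [hB]; push_cast; ring
    have cC : (((i * κ + e) / (2 * e) : ℕ) : ℚ) + ((i * κ / (2 * e) : ℕ) : ℚ) = ((i * κ / e : ℕ) : ℚ) := by
      exact_mod_cast congrArg (fun n : ℕ => (n : ℚ)) hC
    have cD : ((2 * i * κ / (2 * e) : ℕ) : ℚ) = ((i * κ / e : ℕ) : ℚ) := by
      exact_mod_cast congrArg (fun n : ℕ => (n : ℚ)) hD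
    have cK : ((κ / 2 : ℕ) : ℚ) = ((κ : ℚ) - 1) / 2 := by
      have : (κ : ℕ) = 2 * (κ / 2) + 1 := by omega
      have h2 : ((κ : ℚ)) = 2 * ((κ / 2 : ℕ) : ℚ) + 1 := by exact_mod_cast congrArg (fun n : ℕ => (n : ℚ)) this
      linarith
    have heQ : ((e:ℚ)) ≠ 0 := by exact_mod_cast (by omega : e ≠ 0)
    have hr1 : (2*((i:ℚ)+(e:ℚ)))*(κ:ℚ)/(2*(e:ℚ)) - ((i:ℚ)+(e:ℚ))*(κ:ℚ)/(2*(e:ℚ)) - (i:ℚ)*(κ:ℚ)/(2*(e:ℚ)) = (κ:ℚ)/2 := by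
      field_simp
      ring
    have hr2 : ((i:ℚ)+(e:ℚ))*(κ:ℚ)/(2*(e:ℚ)) - 2*(i:ℚ)*(κ:ℚ)/(2*(e:ℚ)) + (i:ℚ)*(κ:ℚ)/(2*(e:ℚ)) = (κ:ℚ)/2 := by
      field_simp
      ring
    by_cases hi : Even i
    · rw [Gval, Gval, if_neg (by rw [hpar]; exact fun h => h hi), if_pos hi]
      unfold Hval
      rw [cA2, cB, cK]
      push_cast
      linear_combination hr1 - cC
    · rw [Gval, Gval, if_pos (hpar.mpr hi), if_neg hi]
      unfold Hval
      rw [cB, cD, cK]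
      push_cast
      linear_combination hr2 + cC

lemma negX_pow_sub_one_ne_zero {i : ℕ} (hi : 1 ≤ i) : ((-X) ^ i - 1 : Polynomial ℝ) ≠ 0 := by
  intro h
  have := congrArg (Polynomial.eval 0) h
  simp [zero_pow (by omega : i ≠ 0)] at this

lemma piFn_negX_pow_sub_one (κ d : ℕ) (hd : 1 ≤ d) (hκ : 1 ≤ κ) {i : ℕ} (hi : 1 ≤ i) :
    piFn κ d ((-X) ^ i - 1) = Gval κ d i := by
  by_cases hpar : Even i
  · rw [Gval, if_pos hpar]
    rw [show ((-X) ^ i - 1 : Polynomial ℝ) = X ^ i - 1 by rw [hpar.neg_pow]]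
    exact piFn_X_pow_sub_one κ d hd hκ hi
  · rw [Gval, if_neg hpar]
    have hodd : Odd i := Nat.not_even_iff_odd.mp hpar
    have hkey : (X ^ i - 1 : Polynomial ℝ) * (-((-X) ^ i - 1)) = X ^ (2*i) - 1 := by
      rw [hodd.neg_pow]
      ring
    have h1 : piFn κ d (X ^ (2*i) - 1) = piFn κ d (X ^ i - 1) + piFn κ d ((-X) ^ i - 1) := by
      rw [← hkey, piFn_mul κ d (X_pow_sub_one_ne_zero hi)
        (neg_ne_zero.mpr (negX_pow_sub_one_ne_zero hi)),
        piFn_neg κ d _ (negX_pow_sub_one_ne_zero hi)]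
    rw [piFn_X_pow_sub_one κ d hd hκ (by omega : 1 ≤ 2*i), piFn_X_pow_sub_one κ d hd hκ hi] at h1
    linarith

lemma sum_Ioc_eq (F : ℕ → ℚ) (p n : ℕ) :
    ∑ i ∈ Finset.Ioc n (n + p), F i = ∑ k ∈ Finset.range p, F (n + 1 + k) := by
  rw [show Finset.Ioc n (n + p) = Finset.Ico (n + 1) (n + 1 + p) from by
    ext k; simp [Finset.mem_Ioc, Finset.mem_Ico]; omega,
    Finset.sum_Ico_eq_sum_range]
  simp

lemma sum_Ioc_linear (F : ℕ → ℚ) (p : ℕ) (c : ℚ) (hF : ∀ i, 1 ≤ i → F (i + p) = F i + c)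
    (n : ℕ) : ∑ i ∈ Finset.Ioc n (n + p), F i = ∑ i ∈ Finset.Ioc 0 p, F i + n * c := by
  induction n with
  | zero => simp
  | succ n ih =>
    rw [sum_Ioc_eq] at ih ⊢
    have h1 := Finset.sum_range_succ' (fun k => F (n + 1 + k)) p
    have h2 := Finset.sum_range_succ (fun k => F (n + 1 + k)) p
    have h3 : ∑ k ∈ Finset.range p, F (n + 1 + 1 + k) = ∑ k ∈ Finset.range p, F (n + 1 + (k + 1)) := by
      apply Finset.sum_congr rfl
      intro k _
      congr 1
      omega
    have h4 : F (n + 1 + p) = F (n + 1) + c := hF (n + 1) (by omega)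
    simp only [Nat.add_zero] at h1 h2
    push_cast
    rw [h3]
    linarith [h1, h2]

/-- Proposition 8.4: with `e = d` if `4 ∣ d`, `e = 2d` if `d` is odd, and `e = d/2` if
`d ≡ 2 (mod 4)`, for all `n, m ≥ 0`:
`π_{κ/d}(∏_{i=n+1}^{n+d}(q^i − 1)) − π_{κ/d}(∏_{i=m+1}^{m+d}(q^i − 1)) = 2κ(n−m)` and
`π_{κ/d}(∏_{i=n+1}^{n+e}((−q)^i − 1)) − π_{κ/d}(∏_{i=m+1}^{m+e}((−q)^i − 1)) = 2κ(n−m)e/d`. -/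
theorem piFn_prod_diff (κ d : ℕ) (hd : 2 ≤ d) (hκ : 1 ≤ κ) (hcop : Nat.Coprime κ d)
    (e : ℕ)
    (he : (4 ∣ d ∧ e = d) ∨ (d % 2 = 1 ∧ e = 2 * d) ∨ (d % 4 = 2 ∧ 2 * e = d))
    (n m : ℕ) :
    (piFn κ d (∏ i ∈ Finset.Ioc n (n + d), (X ^ i - 1)) -
        piFn κ d (∏ i ∈ Finset.Ioc m (m + d), (X ^ i - 1)) =
      2 * (κ : ℚ) * ((n : ℚ) - (m : ℚ))) ∧
    (piFn κ d (∏ i ∈ Finset.Ioc n (n + e), ((-X) ^ i - 1)) -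
        piFn κ d (∏ i ∈ Finset.Ioc m (m + e), ((-X) ^ i - 1)) =
      2 * (κ : ℚ) * ((n : ℚ) - (m : ℚ)) * (e : ℚ) / (d : ℚ)) := by
  have hd1 : 1 ≤ d := by omega
  have hprod1 : ∀ j : ℕ, piFn κ d (∏ i ∈ Finset.Ioc j (j + d), (X ^ i - 1 : Polynomial ℝ))
      = ∑ i ∈ Finset.Ioc j (j + d), Hval κ d i := by
    intro j
    rw [piFn_prod κ d _ _ (fun i hi => X_pow_sub_one_ne_zero (by
      simp only [Finset.mem_Ioc] at hi; omega))]
    apply Finset.sum_congr rfl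
    intro i hi
    simp only [Finset.mem_Ioc] at hi
    exact piFn_X_pow_sub_one κ d hd1 hκ (by omega)
  have hprod2 : ∀ j : ℕ, piFn κ d (∏ i ∈ Finset.Ioc j (j + e), ((-X) ^ i - 1 : Polynomial ℝ))
      = ∑ i ∈ Finset.Ioc j (j + e), Gval κ d i := by
    intro j
    rw [piFn_prod κ d _ _ (fun i hi => negX_pow_sub_one_ne_zero (by
      simp only [Finset.mem_Ioc] at hi; omega))]
    apply Finset.sum_congr rfl
    intro i hi
    simp only [Finset.mem_Ioc] at hi
    exact piFn_negX_pow_sub_one κ d hd1 hκ (by omega)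
  constructor
  · rw [hprod1 n, hprod1 m,
      sum_Ioc_linear (Hval κ d) d (2 * κ) (fun i _ => Hstep κ d hd1 i) n,
      sum_Ioc_linear (Hval κ d) d (2 * κ) (fun i _ => Hstep κ d hd1 i) m]
    ring
  · rw [hprod2 n, hprod2 m,
      sum_Ioc_linear (Gval κ d) e (2 * κ * e / d) (fun i _ => Gstep κ d e hd hκ hcop he i) n,
      sum_Ioc_linear (Gval κ d) e (2 * κ * e / d) (fun i _ => Gstep κ d e hd hκ hcop he i) m]
    ring
end
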